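/- Let d ≥ 1 and let G be a connected locally finite d-regular simple graph on vertex set V. If G is bipartite, then there exist d fixed-point-free involutions τ₁, …, τ_d of V such that for every vertex x the vertices τ₁(x), …, τ_d(x) are pairwise distinct and the neighborhood of x in G is exactly {τ₁(x), …, τ_d(x)}. If G is not bipartite, then the same conclusion holds for the canonical double cover G ⊗ K₂ on the vertex set V × Bool. (Equivalently: if G is bipartite then G is isomorphic to a Schreier graph of the free product (ℤ/2ℤ)^{∗d}, and otherwise G ⊗ K₂ is.) -/

import Mathlib

/-- The canonical double cover `G ⊗ K₂` of a simple graph `G`: vertices are `V × Bool`,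
and `(v, b)` is adjacent to `(w, c)` iff `v` is adjacent to `w` in `G` and `b ≠ c`. -/
def doubleCover {V : Type*} (G : SimpleGraph V) : SimpleGraph (V × Bool) where
  Adj x y := G.Adj x.1 y.1 ∧ x.2 ≠ y.2
  symm := ⟨fun _ _ h => ⟨h.1.symm, Ne.symm h.2⟩⟩
  loopless := ⟨fun _ h => h.2 rfl⟩

/-- A graph `G` carries `d` fixed-point-free involutions `τ₁, …, τ_d` of its vertex set such
that for every vertex `x` the vertices `τ₁ x, …, τ_d x` are pairwise distinct and form exactly
the neighborhood of `x`.  (This encodes being a Schreier graph of `(ℤ/2ℤ)^{∗d}`.) -/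
def InvolutionsStructure {W : Type*} (H : SimpleGraph W) (d : ℕ) : Prop :=
  ∃ τ : Fin d → Equiv.Perm W,
    (∀ i, ∀ x, τ i (τ i x) = x) ∧
    (∀ i, ∀ x, τ i x ≠ x) ∧
    (∀ x : W, Function.Injective (fun i : Fin d => τ i x) ∧
      (Set.range fun i : Fin d => τ i x) = H.neighborSet x)

open Finset

lemma my_csb {α β : Type*} [Nonempty β] {f : α → β} {g : β → α}
    (hf : Function.Injective f) (hg : Function.Injective g) :
    ∃ h : α → β, Function.Bijective h ∧ ∀ x, h x = f x ∨ g (h x) = x := by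
  classical
  set S : Set α := ⋃ n : ℕ, (g ∘ f)^[n] '' (Set.range g)ᶜ with hS
  have hS0 : (Set.range g)ᶜ ⊆ S := by
    intro x hx; exact Set.mem_iUnion.2 ⟨0, by simpa using hx⟩
  have hmem : ∀ x ∉ S, x ∈ Set.range g := fun x hx => by
    by_contra h; exact hx (hS0 h)
  have hS1 : ∀ x ∈ S, g (f x) ∈ S := by
    intro x hx
    obtain ⟨n, hn⟩ := Set.mem_iUnion.1 hx
    obtain ⟨z, hz, hzx⟩ := hn
    refine Set.mem_iUnion.2 ⟨n + 1, z, hz, ?_⟩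
    rw [Function.iterate_succ_apply', Function.comp_apply, hzx]
  refine ⟨fun x => if x ∈ S then f x else Function.invFun g x, ⟨?_, ?_⟩, ?_⟩
  · intro x₁ x₂ h
    by_cases h1 : x₁ ∈ S <;> by_cases h2 : x₂ ∈ S <;> simp only [h1, h2, if_pos, if_neg,
      if_true, if_false] at h
    · exact hf h
    · exfalso
      obtain ⟨y, hy⟩ := hmem x₂ h2
      have hinv : Function.invFun g x₂ = y := by rw [← hy, Function.leftInverse_invFun hg]
      rw [hinv] at h
      exact h2 (by rw [← hy, ← h]; exact hS1 _ h1)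
    · exfalso
      obtain ⟨y, hy⟩ := hmem x₁ h1
      have hinv : Function.invFun g x₁ = y := by rw [← hy, Function.leftInverse_invFun hg]
      rw [hinv] at h
      exact h1 (by rw [← hy, h]; exact hS1 _ h2)
    · obtain ⟨y₁, hy₁⟩ := hmem x₁ h1
      obtain ⟨y₂, hy₂⟩ := hmem x₂ h2
      rw [← hy₁, ← hy₂, Function.leftInverse_invFun hg, Function.leftInverse_invFun hg] at h
      rw [← hy₁, ← hy₂, h]
  · intro b
    by_cases hb : g b ∈ S
    · obtain ⟨n, hn⟩ := Set.mem_iUnion.1 hb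
      obtain ⟨z, hz, hzb⟩ := hn
      cases n with
      | zero => exact absurd ⟨b, by simpa using hzb.symm⟩ hz
      | succ k =>
        rw [Function.iterate_succ_apply', Function.comp_apply] at hzb
        have hw : (g ∘ f)^[k] z ∈ S := Set.mem_iUnion.2 ⟨k, z, hz, rfl⟩
        exact ⟨(g ∘ f)^[k] z, by simp only [if_pos hw]; exact hg hzb⟩
    · exact ⟨g b, by simp only [if_neg hb]; rw [Function.leftInverse_invFun hg]⟩
  · intro x
    by_cases hx : x ∈ S
    · exact Or.inl (by simp only [if_pos hx])
    · exact Or.inr (by simp only [if_neg hx]; exact Function.invFun_eq (hmem x hx))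

lemma exists_matching {V : Type*} [Nonempty V] (G : SimpleGraph V) [G.LocallyFinite]
    {d : ℕ} (hd : 1 ≤ d) (hcol : G.Colorable 2) (hreg : G.IsRegularOfDegree d) :
    ∃ m : V → V, (∀ x, m (m x) = x) ∧ ∀ x, G.Adj x (m x) := by
  classical
  -- Hall's condition
  have hall : ∀ s : Finset V, s.card ≤ (s.biUnion (fun x => G.neighborFinset x)).card := by
    intro s
    set T := s.biUnion (fun x => G.neighborFinset x) with hT
    have hsub : ∀ x ∈ s, G.neighborFinset x ⊆ T := fun x hx => subset_biUnion_of_mem (fun z => G.neighborFinset z) hx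
    have key : d * s.card ≤ d * T.card := by
      calc d * s.card = ∑ _x ∈ s, d := by rw [sum_const, smul_eq_mul, mul_comm]
        _ = ∑ x ∈ s, (G.neighborFinset x).card := by
            refine sum_congr rfl fun x _ => ?_
            rw [← hreg x]; rfl
        _ = ∑ x ∈ s, (T.filter (fun y => G.Adj x y)).card := by
            refine sum_congr rfl fun x hx => ?_
            congr 1
            ext y
            simp only [mem_filter, SimpleGraph.mem_neighborFinset]
            exact ⟨fun h => ⟨hsub x hx (by simpa using h), h⟩, fun h => h.2⟩
        _ = ∑ x ∈ s, ∑ y ∈ T, if G.Adj x y then 1 else 0 := by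
            refine sum_congr rfl fun x _ => ?_
            rw [Finset.card_filter]
        _ = ∑ y ∈ T, ∑ x ∈ s, if G.Adj x y then 1 else 0 := Finset.sum_comm
        _ = ∑ y ∈ T, (s.filter (fun x => G.Adj x y)).card := by
            refine sum_congr rfl fun y _ => ?_
            rw [Finset.card_filter]
        _ ≤ ∑ y ∈ T, (G.neighborFinset y).card := by
            refine sum_le_sum fun y _ => Finset.card_le_card ?_
            intro x hx
            simp only [mem_filter] at hx
            simpa [SimpleGraph.mem_neighborFinset] using hx.2.symm
        _ = ∑ _y ∈ T, d := sum_congr rfl fun y _ => by rw [← hreg y]; rfl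
        _ = d * T.card := by rw [sum_const, smul_eq_mul, mul_comm]
    exact Nat.le_of_mul_le_mul_left key hd
  obtain ⟨f, hf_inj, hf_mem⟩ :=
    (Finset.all_card_le_biUnion_card_iff_exists_injective (fun x => G.neighborFinset x)).mp hall
  have hf_adj : ∀ x, G.Adj x (f x) := fun x => (SimpleGraph.mem_neighborFinset _ _ _).mp (hf_mem x)
  obtain ⟨h, hbij, hprop⟩ := my_csb hf_inj hf_inj
  have hadj : ∀ x, G.Adj x (h x) := by
    intro x
    rcases hprop x with h1 | h2
    · rw [h1]; exact hf_adj x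
    · have := hf_adj (h x); rw [h2] at this; exact this.symm
  set e := Equiv.ofBijective h hbij with he
  have heapp : ∀ x, e x = h x := fun x => rfl
  -- the coloring
  obtain ⟨C⟩ := hcol
  have hCne : ∀ {x y}, G.Adj x y → C x ≠ C y := fun hxy => C.valid hxy
  have two01 : ∀ c : Fin 2, c ≠ 0 → c = 1 := by decide
  have two10 : ∀ c : Fin 2, c ≠ 1 → c = 0 := by decide
  refine ⟨fun x => if C x = 0 then h x else e.symm x, ?_, ?_⟩
  · intro x
    have hadjsymm : ∀ z, G.Adj z (e.symm z) := by
      intro z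
      have := hadj (e.symm z)
      rw [← heapp, Equiv.apply_symm_apply] at this
      exact this.symm
    by_cases hx : C x = 0
    · have h1 : C (h x) ≠ 0 := by rw [← hx]; exact (hCne (hadj x)).symm
      simp only [if_pos hx, if_neg h1]
      rw [← heapp, Equiv.symm_apply_apply]
    · have h1 : C (e.symm x) ≠ C x := (hCne (hadjsymm x)).symm
      have h2 : C (e.symm x) = 0 := by
        have := two01 _ hx
        exact two10 _ (by rw [this] at h1; exact h1)
      simp only [if_neg hx, if_pos h2]
      rw [← heapp, Equiv.apply_symm_apply]
  · intro x
    by_cases hx : C x = 0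
    · simp only [if_pos hx]; exact hadj x
    · simp only [if_neg hx]
      have := hadj (e.symm x)
      rw [← heapp, Equiv.apply_symm_apply] at this
      exact this.symm

lemma invol_of_bipartite {V : Type*} :
    ∀ (d : ℕ) (G : SimpleGraph V) (hlf : G.LocallyFinite),
      G.Colorable 2 → @SimpleGraph.IsRegularOfDegree V G hlf d → InvolutionsStructure G d := by
  intro d
  induction d with
  | zero =>
    intro G hlf _ hreg
    letI := hlf
    refine ⟨fun i => i.elim0, fun i => i.elim0, fun i => i.elim0, fun x => ⟨fun i => i.elim0, ?_⟩⟩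
    have h0 : G.neighborFinset x = ∅ := Finset.card_eq_zero.mp (hreg x)
    have hns : G.neighborSet x = ∅ := by
      ext y
      simp only [Set.mem_empty_iff_false, iff_false]
      intro hy
      have : y ∈ G.neighborFinset x := (SimpleGraph.mem_neighborFinset _ _ _).mpr hy
      rw [h0] at this
      exact absurd this (Finset.notMem_empty y)
    rw [hns, Set.range_eq_empty]
  | succ d ih =>
    intro G hlf hcol hreg
    letI := hlf
    classical
    rcases isEmpty_or_nonempty V with hV | hV
    · exact ⟨fun _ => 1, fun i x => isEmptyElim x, fun i x => isEmptyElim x,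
        fun x => isEmptyElim x⟩
    obtain ⟨m, hm2, hmadj⟩ := exists_matching G (Nat.succ_le_succ (Nat.zero_le d)) hcol hreg
    have hmne : ∀ x, m x ≠ x := fun x => (G.ne_of_adj (hmadj x)).symm
    -- the graph with the matching removed
    set G' : SimpleGraph V := {
      Adj := fun x y => G.Adj x y ∧ m x ≠ y
      symm := by
        constructor
        intro x y hxy
        refine ⟨hxy.1.symm, fun h => hxy.2 ?_⟩
        rw [← h, hm2]
      loopless := ⟨fun x h => G.irrefl h.1⟩ } with hG'
    have hlf' : G'.LocallyFinite := by
      intro v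
      refine Set.Finite.fintype (Set.Finite.subset (G.neighborSet v).toFinite ?_)
      intro y hy
      exact hy.1
    letI := hlf'
    have hnb : ∀ x, G'.neighborFinset x = (G.neighborFinset x).erase (m x) := by
      intro x
      ext y
      simp only [SimpleGraph.mem_neighborFinset, Finset.mem_erase]
      constructor
      · exact fun h => ⟨fun hh => h.2 hh.symm, h.1⟩
      · exact fun h => ⟨h.2, fun hh => h.1 hh.symm⟩
    have hreg' : G'.IsRegularOfDegree d := by
      intro x
      show (G'.neighborFinset x).card = d
      rw [hnb x, Finset.card_erase_of_mem ((SimpleGraph.mem_neighborFinset _ _ _).mpr (hmadj x))]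
      have : (G.neighborFinset x).card = d + 1 := hreg x
      omega
    have hcol' : G'.Colorable 2 := by
      obtain ⟨C⟩ := hcol
      exact ⟨SimpleGraph.Coloring.mk C (fun h => C.valid h.1)⟩
    obtain ⟨τ', hinv', hfpf', hx'⟩ := ih G' hlf' hcol' hreg'
    have hmperm : Function.Involutive m := hm2
    set τ : Fin (d + 1) → Equiv.Perm V := Fin.cons hmperm.toPerm τ' with hτ
    have hτ0 : ∀ x, τ 0 x = m x := fun x => rfl
    have hτs : ∀ (j : Fin d) x, τ j.succ x = τ' j x := fun j x => by rw [hτ, Fin.cons_succ]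
    have hmem' : ∀ (j : Fin d) x, G'.Adj x (τ' j x) := by
      intro j x
      have h2 : τ' j x ∈ G'.neighborSet x := by
        rw [← (hx' x).2]; exact ⟨j, rfl⟩
      exact h2
    refine ⟨τ, ?_, ?_, ?_⟩
    · intro i
      refine Fin.cases ?_ ?_ i
      · intro x; rw [hτ0, hτ0]; exact hm2 x
      · intro j x; rw [hτs, hτs]; exact hinv' j x
    · intro i
      refine Fin.cases ?_ ?_ i
      · intro x; rw [hτ0]; exact hmne x
      · intro j x; rw [hτs]; exact hfpf' j x
    · intro x
      constructor
      · intro i j hij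
        simp only at hij
        induction i using Fin.cases with
        | zero =>
          induction j using Fin.cases with
          | zero => rfl
          | succ j' =>
            exfalso
            rw [hτ0, hτs] at hij
            exact (hmem' j' x).2 hij
        | succ i' =>
          induction j using Fin.cases with
          | zero =>
            exfalso
            rw [hτ0, hτs] at hij
            exact (hmem' i' x).2 hij.symm
          | succ j' =>
            rw [hτs, hτs] at hij
            have := (hx' x).1 hij
            rw [this]
      · have hfe : (fun i : Fin (d+1) => τ i x) = Fin.cons (m x) (fun j => τ' j x) := by
          funext i
          induction i using Fin.cases with
          | zero => exact hτ0 x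
          | succ j => rw [hτs]; simp [Fin.cons_succ]
        rw [hfe, Fin.range_cons]
        have hr' : (Set.range fun j : Fin d => τ' j x) = G'.neighborSet x := (hx' x).2
        rw [hr']
        ext y
        simp only [Set.mem_insert_iff, SimpleGraph.mem_neighborSet]
        constructor
        · rintro (rfl | h)
          · exact hmadj x
          · exact h.1
        · intro h
          by_cases hy : y = m x
          · exact Or.inl hy
          · exact Or.inr ⟨h, fun hh => hy hh.symm⟩

/-- The neighborhood of `(v, b)` in the double cover is equivalent to that of `v`. -/
def dcEquiv {V : Type*} (G : SimpleGraph V) (p : V × Bool) :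
    G.neighborSet p.1 ≃ (doubleCover G).neighborSet p where
  toFun w := ⟨(w.1, !p.2), (show G.Adj p.1 w.1 ∧ p.2 ≠ !p.2 from ⟨w.2, by cases hb : p.2 <;> simp⟩)⟩
  invFun q := ⟨q.1.1, (show G.Adj p.1 q.1.1 ∧ p.2 ≠ q.1.2 from q.2).1⟩
  left_inv w := rfl
  right_inv q := by
    obtain ⟨⟨w, c⟩, hq⟩ := q
    obtain ⟨hadj, hne⟩ : G.Adj p.1 w ∧ p.2 ≠ c := hq
    have : c = !p.2 := by
      cases hp : p.2 <;> cases hc : c <;> simp_all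
    subst this
    rfl


/-- Let `G` be a connected locally finite `d`-regular simple graph, `d ≥ 1`.
If `G` is bipartite, then `G` carries `d` fixed-point-free involutions describing all
neighborhoods; if `G` is not bipartite, then so does the canonical double cover `G ⊗ K₂`.
(Equivalently: `G`, respectively `G ⊗ K₂`, is isomorphic to a Schreier graph of
`(ℤ/2ℤ)^{∗d}`.) -/
theorem bipartite_or_doubleCover_involutions {V : Type*} (G : SimpleGraph V)
    [G.LocallyFinite] (d : ℕ) (hd : 1 ≤ d) (hconn : G.Connected)
    (hreg : G.IsRegularOfDegree d) :
    (G.Colorable 2 → InvolutionsStructure G d) ∧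
    (¬ G.Colorable 2 → InvolutionsStructure (doubleCover G) d) := by
  constructor
  · intro hcol
    exact invol_of_bipartite d G inferInstance hcol hreg
  · intro _
    letI hlf2 : (doubleCover G).LocallyFinite := fun p => Fintype.ofEquiv _ (dcEquiv G p)
    have hcol2 : (doubleCover G).Colorable 2 := by
      refine ⟨SimpleGraph.Coloring.mk (fun p => if p.2 then 0 else 1) ?_⟩
      rintro ⟨v, b⟩ ⟨w, c⟩ hvw
      obtain ⟨_, hbc⟩ : G.Adj v w ∧ b ≠ c := hvw
      cases b <;> cases c <;> simp_all
    have hreg2 : (doubleCover G).IsRegularOfDegree d := by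
      intro p
      have h1 : Fintype.card ((doubleCover G).neighborSet p) = Fintype.card (G.neighborSet p.1) :=
        Fintype.card_congr (dcEquiv G p).symm
      have h2 : (doubleCover G).degree p = Fintype.card ((doubleCover G).neighborSet p) :=
        (SimpleGraph.card_neighborSet_eq_degree _ _).symm
      rw [h2, h1, SimpleGraph.card_neighborSet_eq_degree]
      exact hreg p.1
    exact invol_of_bipartite d (doubleCover G) hlf2 hcol2 hreg2
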